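/- Let R be a commutative ring in which 2 is invertible, and let B be the commutative R-algebra generated by f_1,…,f_g, h_1,…,h_g subject to relations of the form (for all i ≠ j): f_i f_j, f_i h_j, h_i h_j lie in the R-span of {1, f_1,…,f_g, h_1,…,h_g, f_i^2, f_j^2}, and h_i^2 − f_i^3 lies in the R-span of {1, f_1,…,f_g, h_1,…,h_g}. Assume the monomials {1} ∪ {f_i^n : n ≥ 1} ∪ {f_i^n h_i : n ≥ 0} form an R-basis of B. Define the R-submodules F̄_n B = R·1 + ∑_{2 ≤ m ≤ n, 1 ≤ i ≤ g} R·b_i[m], where b_i[2k] = f_i^k and b_i[2k+1] = f_i^{k-1} h_i. Then (F̄_n B) is an algebra filtration: F̄_n B · F̄_{n'} B ⊆ F̄_{n+n'} B for all n, n' ≥ 0. -/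
import Mathlib


open Finset in
/-- Lemma 1.8(ii) of the paper.  Let `R` be a commutative ring in which
`2` is invertible, and let `B` be the commutative `R`-algebra generated by
`f₁,…,f_g, h₁,…,h_g` subject to relations of the form (main-eq-ff)–(main-eq-h2f3): for
`i ≠ j`, `fᵢfⱼ`, `fᵢhⱼ`, `hᵢhⱼ` lie in the `R`-span of `{1, f₁,…,f_g, h₁,…,h_g, fᵢ², fⱼ²}`
with the prescribed shape, and `hᵢ² − fᵢ³` lies in the `R`-span of
`{1, f₁,…,f_g, h₁,…,h_g}`.  Assume the monomials `{1} ∪ {fᵢⁿ : n ≥ 1} ∪ {fᵢⁿhᵢ : n ≥ 0}`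
(equivalently `{1} ∪ {bᵢ[m] : m ≥ 2}` where `bᵢ[2k] = fᵢᵏ`, `bᵢ[2k+1] = fᵢ^{k−1}hᵢ`)
form an `R`-basis of `B`.  Then the `R`-submodules
`F̄_n B = R·1 + ∑_{2 ≤ m ≤ n, i} R·bᵢ[m]` form an algebra filtration:
`F̄_n B · F̄_{n'} B ⊆ F̄_{n+n'} B` for all `n, n' ≥ 0`. -/
theorem stmt6 {R B : Type*} [CommRing R] (h2 : Invertible (2 : R))
    [CommRing B] [Algebra R B] (g : ℕ)
    (f h : Fin g → B)
    (α γ a : Fin g → Fin g → R) (c : Fin g → Fin g → Fin g → R)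
    (d t v r δ b : Fin g → Fin g → R) (e : Fin g → Fin g → Fin g → R)
    (β ε ψ u : Fin g → Fin g → R) (l : Fin g → Fin g → Fin g → R)
    (gc kc : Fin g → Fin g → R) (π s : Fin g → R)
    -- relation (main-eq-ff)
    (hff : ∀ i j, i ≠ j → f i * f j =
      algebraMap R B (α j i) * h i + algebraMap R B (α i j) * h j +
      algebraMap R B (γ j i) * f i + algebraMap R B (γ i j) * f j +
      (∑ kk ∈ univ.filter (fun kk => kk ≠ i ∧ kk ≠ j), algebraMap R B (c i j kk) * f kk) +
      algebraMap R B (a i j))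
    -- relation (main-eq-fh)
    (hfh : ∀ i j, i ≠ j → f i * h j =
      algebraMap R B (d i j) * f j ^ 2 + algebraMap R B (t j i) * h i +
      algebraMap R B (v i j) * h j + algebraMap R B (r j i) * f i +
      algebraMap R B (δ i j) * f j +
      (∑ kk ∈ univ.filter (fun kk => kk ≠ i ∧ kk ≠ j), algebraMap R B (e i j kk) * f kk) +
      algebraMap R B (b i j))
    -- relation (main-eq-hh)
    (hhh : ∀ i j, i ≠ j → h i * h j =
      algebraMap R B (β j i) * f i ^ 2 + algebraMap R B (β i j) * f j ^ 2 +
      algebraMap R B (ε j i) * h i + algebraMap R B (ε i j) * h j +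
      algebraMap R B (ψ j i) * f i + algebraMap R B (ψ i j) * f j +
      (∑ kk ∈ univ.filter (fun kk => kk ≠ i ∧ kk ≠ j), algebraMap R B (l i j kk) * f kk) +
      algebraMap R B (u i j))
    -- relation (main-eq-h2f3)
    (hh2 : ∀ i, h i ^ 2 = f i ^ 3 +
      (∑ j ∈ univ.filter (fun j => j ≠ i), algebraMap R B (gc i j) * h j) +
      algebraMap R B (π i) * f i +
      (∑ j ∈ univ.filter (fun j => j ≠ i), algebraMap R B (kc i j) * f j) +
      algebraMap R B (s i))
    -- the elements bᵢ[m], m ≥ 2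
    (bb : Fin g → ℕ → B)
    (hbb : ∀ i m, bb i m = if m % 2 = 0 then f i ^ (m / 2) else f i ^ ((m - 3) / 2) * h i)
    -- `{1} ∪ {bᵢ[m] : m ≥ 2}` is an `R`-basis of `B`
    (hindep : LinearIndependent R
      (fun p : Option (Fin g × {m : ℕ // 2 ≤ m}) => p.elim 1 fun q => bb q.1 q.2))
    (hspan : Submodule.span R (Set.range
      (fun p : Option (Fin g × {m : ℕ // 2 ≤ m}) => p.elim 1 fun q => bb q.1 q.2)) = ⊤)
    -- the filtration
    (Fb : ℕ → Submodule R B)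
    (hFb : ∀ m, Fb m =
      Submodule.span R ({1} ∪ {y : B | ∃ i mm, 2 ≤ mm ∧ mm ≤ m ∧ y = bb i mm})) :
    ∀ m m' : ℕ, Fb m * Fb m' ≤ Fb (m + m') := by
  classical
  -- 1 is in every filtration step
  have hone : ∀ m : ℕ, (1 : B) ∈ Fb m := by
    intro m; rw [hFb]
    exact Submodule.subset_span (Or.inl rfl)
  -- monotonicity of the filtration
  have hmono : ∀ {m m' : ℕ}, m ≤ m' → Fb m ≤ Fb m' := by
    intro m m' hmm
    rw [hFb, hFb]
    apply Submodule.span_mono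
    rintro x (hx | ⟨i, mm, h1, hle, rfl⟩)
    · exact Or.inl hx
    · exact Or.inr ⟨i, mm, h1, hle.trans hmm, rfl⟩
  -- basis elements are in the filtration
  have hbm : ∀ (i : Fin g) (mm : ℕ), 2 ≤ mm → bb i mm ∈ Fb mm := by
    intro i mm h2m
    rw [hFb]
    exact Submodule.subset_span (Or.inr ⟨i, mm, h2m, le_rfl, rfl⟩)
  -- powers of f
  have hfp : ∀ (i : Fin g) (p : ℕ), f i ^ p ∈ Fb (2 * p) := by
    intro i p
    rcases Nat.eq_zero_or_pos p with rfl | hp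
    · simpa using hone 0
    · have hmem := hbm i (2 * p) (by omega)
      have h1 : (2 * p) % 2 = 0 := by omega
      have h2 : (2 * p) / 2 = p := by omega
      rw [hbb, if_pos h1, h2] at hmem
      exact hmem
  have hfhp : ∀ (i : Fin g) (p : ℕ), f i ^ p * h i ∈ Fb (2 * p + 3) := by
    intro i p
    have hmem := hbm i (2 * p + 3) (by omega)
    have h1 : ¬ (2 * p + 3) % 2 = 0 := by omega
    have h2 : (2 * p + 3 - 3) / 2 = p := by omega
    rw [hbb, if_neg h1, h2] at hmem
    exact hmem
  have hfm : ∀ (i : Fin g) (m : ℕ), 2 ≤ m → f i ∈ Fb m := by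
    intro i m hm
    have := hfp i 1
    rw [pow_one] at this
    exact hmono (by omega) this
  have hhm : ∀ (i : Fin g) (m : ℕ), 3 ≤ m → h i ∈ Fb m := by
    intro i m hm
    have := hfhp i 0
    rw [pow_zero, one_mul] at this
    exact hmono (by omega) this
  -- scalar helpers
  have hsmul : ∀ (rr : R) (x : B) {m : ℕ}, x ∈ Fb m → algebraMap R B rr * x ∈ Fb m := by
    intro rr x m hx
    rw [← Algebra.smul_def]
    exact Submodule.smul_mem _ _ hx
  have hmulc : ∀ (rr : R) (x y : B) {m : ℕ}, x * y ∈ Fb m →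
      x * (algebraMap R B rr * y) ∈ Fb m := by
    intro rr x y m hx
    rw [mul_left_comm]
    exact hsmul _ _ hx
  have hconst : ∀ (rr : R) (x : B) {m : ℕ}, x ∈ Fb m → x * algebraMap R B rr ∈ Fb m := by
    intro rr x m hx
    rw [mul_comm]
    exact hsmul _ _ hx
  -- parity case analysis for basis elements
  have hbbcases : ∀ (i : Fin g) (mm : ℕ), 2 ≤ mm →
      (∃ p, 1 ≤ p ∧ mm = 2 * p ∧ bb i mm = f i ^ p) ∨
      (∃ p, mm = 2 * p + 3 ∧ bb i mm = f i ^ p * h i) := by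
    intro i mm h2m
    rcases Nat.even_or_odd mm with he | ho
    · rw [Nat.even_iff] at he
      refine Or.inl ⟨mm / 2, by omega, by omega, ?_⟩
      rw [hbb, if_pos he]
    · rw [Nat.odd_iff] at ho
      refine Or.inr ⟨(mm - 3) / 2, by omega, ?_⟩
      rw [hbb, if_neg (by omega)]
  -- the key inductive statement
  have key : ∀ n : ℕ, (∀ i j, f i ^ n * f j ∈ Fb (2 * n + 2)) ∧
      (∀ i j, f i ^ n * h j ∈ Fb (2 * n + 3)) := by
    intro n
    induction n using Nat.strong_induction_on with
    | _ n ih =>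
      obtain _ | n := n
      · constructor
        · intro i j
          rw [pow_zero, one_mul]
          exact hfm j _ (by omega)
        · intro i j
          rw [pow_zero, one_mul]
          exact hhm j _ (by omega)
      · have ihn := ih n (Nat.lt_succ_self n)
        have Q1 : ∀ i j, f i ^ (n + 1) * f j ∈ Fb (2 * (n + 1) + 2) := by
          intro i j
          rcases eq_or_ne i j with rfl | hij
          · rw [← pow_succ]
            exact hmono (by omega) (hfp i (n + 2))
          · rw [show f i ^ (n + 1) * f j = f i ^ n * (f i * f j) by ring, hff i j hij]
            simp only [mul_add, Finset.mul_sum]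
            refine add_mem (add_mem (add_mem (add_mem (add_mem ?_ ?_) ?_) ?_) ?_) ?_
            · exact hmono (by omega) (hmulc _ _ _ (ihn.2 i i))
            · exact hmono (by omega) (hmulc _ _ _ (ihn.2 i j))
            · exact hmono (by omega) (hmulc _ _ _ (ihn.1 i i))
            · exact hmono (by omega) (hmulc _ _ _ (ihn.1 i j))
            · exact Submodule.sum_mem _ fun kk _ =>
                hmono (by omega) (hmulc _ _ _ (ihn.1 i kk))
            · exact hmono (by omega) (hconst _ _ (hfp i n))
        have hq1 : ∀ p, p ≤ n + 1 → ∀ i j, f i ^ p * f j ∈ Fb (2 * p + 2) := by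
          intro p hp i j
          rcases Nat.lt_or_ge p (n + 1) with hlt | hge
          · exact (ih p (by omega)).1 i j
          · have : p = n + 1 := by omega
            subst this
            exact Q1 i j
        have hq2 : ∀ p, p ≤ n → ∀ i j, f i ^ p * h j ∈ Fb (2 * p + 3) := by
          intro p hp i j
          exact (ih p (by omega)).2 i j
        -- bounded multiplication lemma
        have mulF : ∀ (j : Fin g) (m : ℕ) (x : B), m ≤ 2 * n + 2 → x ∈ Fb m →
            f j * x ∈ Fb (m + 2) := by
          intro j m x hmle hx
          rw [hFb] at hx
          induction hx using Submodule.span_induction with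
          | mem x hxm =>
            simp only [Set.mem_union, Set.mem_singleton_iff, Set.mem_setOf_eq] at hxm
            rcases hxm with rfl | ⟨k, mm, h2m, hmml, rfl⟩
            · rw [mul_one]
              exact hfm j _ (by omega)
            · rcases hbbcases k mm h2m with ⟨p, hp1, hmeq, hbbe⟩ | ⟨p, hmeq, hbbe⟩
              · rw [hbbe, mul_comm]
                exact hmono (by omega) (hq1 p (by omega) k j)
              · rw [hbbe]
                rcases eq_or_ne j k with rfl | hjk
                · rw [show f j * (f j ^ p * h j) = f j ^ (p + 1) * h j by ring]
                  exact hmono (by omega) (hfhp j (p + 1))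
                · rw [show f j * (f k ^ p * h k) = f k ^ p * (f j * h k) by ring,
                    hfh j k hjk]
                  simp only [mul_add, Finset.mul_sum]
                  refine add_mem (add_mem (add_mem (add_mem (add_mem (add_mem ?_ ?_) ?_)
                    ?_) ?_) ?_) ?_
                  · have hd : f k ^ p * f k ^ 2 ∈ Fb (2 * (p + 2)) := by
                      rw [show f k ^ p * f k ^ 2 = f k ^ (p + 2) by ring]
                      exact hfp k (p + 2)
                    exact hmono (by omega) (hmulc _ _ _ hd)
                  · exact hmono (by omega) (hmulc _ _ _ (hq2 p (by omega) k j))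
                  · exact hmono (by omega) (hmulc _ _ _ (hfhp k p))
                  · exact hmono (by omega) (hmulc _ _ _ (hq1 p (by omega) k j))
                  · exact hmono (by omega) (hmulc _ _ _ (hq1 p (by omega) k k))
                  · exact Submodule.sum_mem _ fun kk _ =>
                      hmono (by omega) (hmulc _ _ _ (hq1 p (by omega) k kk))
                  · exact hmono (by omega) (hconst _ _ (hfp k p))
          | zero =>
            rw [mul_zero]
            exact zero_mem _
          | add x y hx hy ihx ihy =>
            rw [mul_add]
            exact add_mem ihx ihy
          | smul a x hx ihx =>
            rw [mul_smul_comm]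
            exact Submodule.smul_mem _ _ ihx
        have Q3 : ∀ i j, f i ^ n * f j ^ 2 ∈ Fb (2 * n + 4) := by
          intro i j
          have h1 := mulF j (2 * n + 2) _ le_rfl (ihn.1 i j)
          rw [show f j * (f i ^ n * f j) = f i ^ n * f j ^ 2 by ring] at h1
          exact hmono (by omega) h1
        refine ⟨Q1, ?_⟩
        intro i j
        rcases eq_or_ne i j with rfl | hij
        · exact hmono (by omega) (hfhp i (n + 1))
        · rw [show f i ^ (n + 1) * h j = f i ^ n * (f i * h j) by ring, hfh i j hij]
          simp only [mul_add, Finset.mul_sum]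
          refine add_mem (add_mem (add_mem (add_mem (add_mem (add_mem ?_ ?_) ?_) ?_) ?_)
            ?_) ?_
          · exact hmono (by omega) (hmulc _ _ _ (Q3 i j))
          · exact hmono (by omega) (hmulc _ _ _ (ihn.2 i i))
          · exact hmono (by omega) (hmulc _ _ _ (ihn.2 i j))
          · exact hmono (by omega) (hmulc _ _ _ (ihn.1 i i))
          · exact hmono (by omega) (hmulc _ _ _ (ihn.1 i j))
          · exact Submodule.sum_mem _ fun kk _ =>
              hmono (by omega) (hmulc _ _ _ (ihn.1 i kk))
          · exact hmono (by omega) (hconst _ _ (hfp i n))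
  -- unbounded multiplication by f j
  have mulFall : ∀ (j : Fin g) (m : ℕ) (x : B), x ∈ Fb m → f j * x ∈ Fb (m + 2) := by
    intro j m x hx
    rw [hFb] at hx
    induction hx using Submodule.span_induction with
    | mem x hxm =>
      simp only [Set.mem_union, Set.mem_singleton_iff, Set.mem_setOf_eq] at hxm
      rcases hxm with rfl | ⟨k, mm, h2m, hmml, rfl⟩
      · rw [mul_one]
        exact hfm j _ (by omega)
      · rcases hbbcases k mm h2m with ⟨p, hp1, hmeq, hbbe⟩ | ⟨p, hmeq, hbbe⟩
        · rw [hbbe, mul_comm]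
          exact hmono (by omega) ((key p).1 k j)
        · rw [hbbe]
          rcases eq_or_ne j k with rfl | hjk
          · rw [show f j * (f j ^ p * h j) = f j ^ (p + 1) * h j by ring]
            exact hmono (by omega) (hfhp j (p + 1))
          · rw [show f j * (f k ^ p * h k) = f k ^ p * (f j * h k) by ring, hfh j k hjk]
            simp only [mul_add, Finset.mul_sum]
            refine add_mem (add_mem (add_mem (add_mem (add_mem (add_mem ?_ ?_) ?_) ?_) ?_)
              ?_) ?_
            · have hd : f k ^ p * f k ^ 2 ∈ Fb (2 * (p + 2)) := by
                rw [show f k ^ p * f k ^ 2 = f k ^ (p + 2) by ring]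
                exact hfp k (p + 2)
              exact hmono (by omega) (hmulc _ _ _ hd)
            · exact hmono (by omega) (hmulc _ _ _ ((key p).2 k j))
            · exact hmono (by omega) (hmulc _ _ _ (hfhp k p))
            · exact hmono (by omega) (hmulc _ _ _ ((key p).1 k j))
            · exact hmono (by omega) (hmulc _ _ _ ((key p).1 k k))
            · exact Submodule.sum_mem _ fun kk _ =>
                hmono (by omega) (hmulc _ _ _ ((key p).1 k kk))
            · exact hmono (by omega) (hconst _ _ (hfp k p))
    | zero =>
      rw [mul_zero]
      exact zero_mem _
    | add x y hx hy ihx ihy =>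
      rw [mul_add]
      exact add_mem ihx ihy
    | smul a x hx ihx =>
      rw [mul_smul_comm]
      exact Submodule.smul_mem _ _ ihx
  have Q3all : ∀ (p : ℕ) (i j : Fin g), f i ^ p * f j ^ 2 ∈ Fb (2 * p + 4) := by
    intro p i j
    have h1 := mulFall j (2 * p + 2) _ ((key p).1 i j)
    rw [show f j * (f i ^ p * f j) = f i ^ p * f j ^ 2 by ring] at h1
    exact hmono (by omega) h1
  -- multiplication by h j
  have mulHall : ∀ (j : Fin g) (m : ℕ) (x : B), x ∈ Fb m → h j * x ∈ Fb (m + 3) := by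
    intro j m x hx
    rw [hFb] at hx
    induction hx using Submodule.span_induction with
    | mem x hxm =>
      simp only [Set.mem_union, Set.mem_singleton_iff, Set.mem_setOf_eq] at hxm
      rcases hxm with rfl | ⟨k, mm, h2m, hmml, rfl⟩
      · rw [mul_one]
        exact hhm j _ (by omega)
      · rcases hbbcases k mm h2m with ⟨p, hp1, hmeq, hbbe⟩ | ⟨p, hmeq, hbbe⟩
        · rw [hbbe, mul_comm]
          exact hmono (by omega) ((key p).2 k j)
        · rw [hbbe]
          rcases eq_or_ne j k with rfl | hjk
          · rw [show h j * (f j ^ p * h j) = f j ^ p * h j ^ 2 by ring, hh2 j]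
            simp only [mul_add, Finset.mul_sum]
            refine add_mem (add_mem (add_mem (add_mem ?_ ?_) ?_) ?_) ?_
            · rw [show f j ^ p * f j ^ 3 = f j ^ (p + 3) by ring]
              exact hmono (by omega) (hfp j (p + 3))
            · exact Submodule.sum_mem _ fun kk _ =>
                hmono (by omega) (hmulc _ _ _ ((key p).2 j kk))
            · exact hmono (by omega) (hmulc _ _ _ ((key p).1 j j))
            · exact Submodule.sum_mem _ fun kk _ =>
                hmono (by omega) (hmulc _ _ _ ((key p).1 j kk))
            · exact hmono (by omega) (hconst _ _ (hfp j p))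
          · rw [show h j * (f k ^ p * h k) = f k ^ p * (h j * h k) by ring, hhh j k hjk]
            simp only [mul_add, Finset.mul_sum]
            refine add_mem (add_mem (add_mem (add_mem (add_mem (add_mem (add_mem ?_ ?_)
              ?_) ?_) ?_) ?_) ?_) ?_
            · exact hmono (by omega) (hmulc _ _ _ (Q3all p k j))
            · have hd : f k ^ p * f k ^ 2 ∈ Fb (2 * (p + 2)) := by
                rw [show f k ^ p * f k ^ 2 = f k ^ (p + 2) by ring]
                exact hfp k (p + 2)
              exact hmono (by omega) (hmulc _ _ _ hd)
            · exact hmono (by omega) (hmulc _ _ _ ((key p).2 k j))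
            · exact hmono (by omega) (hmulc _ _ _ (hfhp k p))
            · exact hmono (by omega) (hmulc _ _ _ ((key p).1 k j))
            · exact hmono (by omega) (hmulc _ _ _ ((key p).1 k k))
            · exact Submodule.sum_mem _ fun kk _ =>
                hmono (by omega) (hmulc _ _ _ ((key p).1 k kk))
            · exact hmono (by omega) (hconst _ _ (hfp k p))
    | zero =>
      rw [mul_zero]
      exact zero_mem _
    | add x y hx hy ihx ihy =>
      rw [mul_add]
      exact add_mem ihx ihy
    | smul a x hx ihx =>
      rw [mul_smul_comm]
      exact Submodule.smul_mem _ _ ihx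
  -- multiplication by powers of f
  have hpow : ∀ (j : Fin g) (p m : ℕ) (x : B), x ∈ Fb m → f j ^ p * x ∈ Fb (m + 2 * p) := by
    intro j p
    induction p with
    | zero =>
      intro m x hx
      rw [pow_zero, one_mul]
      exact hmono (by omega) hx
    | succ p ihp =>
      intro m x hx
      have h1 := mulFall j _ _ (ihp m x hx)
      rw [show f j * (f j ^ p * x) = f j ^ (p + 1) * x by ring] at h1
      exact hmono (by omega) h1
  -- conclusion
  intro m m'
  rw [Submodule.mul_le]
  intro x hx y hy
  rw [hFb m] at hx
  induction hx using Submodule.span_induction with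
  | mem x hxm =>
    simp only [Set.mem_union, Set.mem_singleton_iff, Set.mem_setOf_eq] at hxm
    rcases hxm with rfl | ⟨i, mm, h2m, hmml, rfl⟩
    · rw [one_mul]
      exact hmono (by omega) hy
    · rcases hbbcases i mm h2m with ⟨p, hp1, hmeq, hbbe⟩ | ⟨p, hmeq, hbbe⟩
      · rw [hbbe]
        exact hmono (by omega) (hpow i p m' y hy)
      · rw [hbbe, show f i ^ p * h i * y = f i ^ p * (h i * y) by ring]
        exact hmono (by omega) (hpow i p (m' + 3) _ (mulHall i m' y hy))
  | zero =>
    rw [zero_mul]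
    exact zero_mem _
  | add a b ha hb iha ihb =>
    rw [add_mul]
    exact add_mem iha ihb
  | smul r x hx ihx =>
    rw [smul_mul_assoc]
    exact Submodule.smul_mem _ _ ihx
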